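/- Permutation characterization of partition equality (Gelernter's relaxed notion): let M be a finite type of messages and S a finite type of senders, and let f₀, f₁ : M → S assign to each message its sender. Then there exists a permutation π of S with f₁ = π ∘ f₀ if and only if the families of nonempty fibers agree: { f₀ ⁻¹ {s} | s ∈ S, f₀ ⁻¹ {s} ≠ ∅ } = { f₁ ⁻¹ {s} | s ∈ S, f₁ ⁻¹ {s} ≠ ∅ } (as sets of subsets of M). -/
import Mathlib


/-- Permutation characterization of partition equality (Gelernter's relaxed
notion): two sender assignments agree up to a permutation of senders iff their
families of nonempty fibers coincide. -/
theorem perm_iff_fiber_partition_eq {M S : Type*} [Fintype M] [Fintype S]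
    (f₀ f₁ : M → S) :
    (∃ π : Equiv.Perm S, f₁ = π ∘ f₀) ↔
      {T : Set M | ∃ s : S, T = f₀ ⁻¹' {s} ∧ T ≠ ∅}
        = {T : Set M | ∃ s : S, T = f₁ ⁻¹' {s} ∧ T ≠ ∅} := by
  classical
  constructor
  · rintro ⟨π, rfl⟩
    ext T
    constructor
    · rintro ⟨s, rfl, hne⟩
      refine ⟨π s, ?_, hne⟩
      ext m
      simp [π.injective.eq_iff]
    · rintro ⟨s, rfl, hne⟩
      refine ⟨π.symm s, ?_, hne⟩
      ext m
      simp only [Set.mem_preimage, Set.mem_singleton_iff, Function.comp_apply]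
      constructor
      · rintro rfl; simp
      · intro h; rw [h]; simp
  · intro hset
    -- kernel equality
    have hker : ∀ m m' : M, f₀ m = f₀ m' ↔ f₁ m = f₁ m' := by
      intro m m'
      have hmem : f₀ ⁻¹' {f₀ m} ∈ {T : Set M | ∃ s : S, T = f₀ ⁻¹' {s} ∧ T ≠ ∅} :=
        ⟨f₀ m, rfl, fun h => (Set.eq_empty_iff_forall_notMem.mp h m) rfl⟩
      rw [hset] at hmem
      obtain ⟨t, ht, -⟩ := hmem
      have hmmem : m ∈ f₁ ⁻¹' {t} := by rw [← ht]; exact rfl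
      have htm : t = f₁ m := hmmem.symm
      subst htm
      have := Set.ext_iff.mp ht m'
      simp only [Set.mem_preimage, Set.mem_singleton_iff] at this
      constructor
      · intro h; exact (this.mp h.symm).symm
      · intro h; exact (this.mpr h.symm).symm
    set p : S → Prop := fun s => s ∈ Set.range f₀ with hp
    set q : S → Prop := fun s => s ∈ Set.range f₁ with hq
    set g : {s // p s} → {s // q s} :=
      fun s => ⟨f₁ (Classical.choose s.2), Set.mem_range_self _⟩ with hg
    have hbij : Function.Bijective g := by
      constructor
      · rintro ⟨s, hs⟩ ⟨s', hs'⟩ h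
        simp only [hg, Subtype.mk.injEq] at h
        have := (hker _ _).mpr h
        have h1 : f₀ (Classical.choose hs) = s := Classical.choose_spec hs
        have h2 : f₀ (Classical.choose hs') = s' := Classical.choose_spec hs'
        simp only [Subtype.mk.injEq]
        rw [← h1, ← h2, this]
      · rintro ⟨t, ht⟩
        refine ⟨⟨f₀ (Classical.choose ht), Set.mem_range_self _⟩, ?_⟩
        simp only [hg, Subtype.mk.injEq]
        have hs : p (f₀ (Classical.choose ht)) := Set.mem_range_self _
        have h1 : f₀ (Classical.choose hs) = f₀ (Classical.choose ht) :=
          Classical.choose_spec hs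
        have h2 : f₁ (Classical.choose ht) = t := Classical.choose_spec ht
        rw [(hker _ _).mp h1, h2]
    refine ⟨(Equiv.ofBijective g hbij).extendSubtype, ?_⟩
    funext m
    have hm : p (f₀ m) := Set.mem_range_self m
    rw [Function.comp_apply, Equiv.extendSubtype_apply_of_mem _ _ hm,
      Equiv.ofBijective_apply]
    show f₁ m = f₁ (Classical.choose hm)
    exact (hker _ _).mp (Classical.choose_spec hm).symm
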